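/- Let κ be a cardinal with cf(κ) > ω₁ and let X be a Banach space of density κ whose dual X* contains a subspace isomorphic to a nonseparable WLD Banach space. Then X does not admit an overcomplete set. -/

import Mathlib

open Cardinal Set

universe u

/-- The density character of a topological space: the least cardinality of a dense subset. -/
noncomputable def dens (X : Type u) [TopologicalSpace X] : Cardinal.{u} :=
  ⨅ s : {s : Set X // Dense s}, Cardinal.mk ↥(s.1)

/-- A set is linearly dense if its closed linear span is the whole space. -/
def LinearlyDense {X : Type u} [NormedAddCommGroup X] [NormedSpace ℝ X] (S : Set X) : Prop :=
  (Submodule.span ℝ S).topologicalClosure = ⊤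

/-- A set `Y` is overcomplete in `X` if `|Y| = dens X` and every subset of `Y` of full
cardinality is linearly dense in `X`. -/
def Overcomplete {X : Type u} [NormedAddCommGroup X] [NormedSpace ℝ X] (Y : Set X) : Prop :=
  Cardinal.mk ↥Y = dens X ∧ ∀ Z ⊆ Y, Cardinal.mk ↥Z = Cardinal.mk ↥Y → LinearlyDense Z

/-- if `cf κ > ω₁`, `X` is a Banach space of density `κ`, and `X*` contains
an isomorphic copy of a nonseparable WLD Banach space `Y`, then `X` has no overcomplete
set. -/
theorem stmt17 {X Y : Type u} [NormedAddCommGroup X] [NormedSpace ℝ X] [CompleteSpace X]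
    [NormedAddCommGroup Y] [NormedSpace ℝ Y] [CompleteSpace Y]
    {κ : Cardinal.{u}} (hcf : Cardinal.aleph 1 < (κ.ord).cof) (hdens : dens X = κ)
    (hWLD : ∃ D : Set Y, LinearlyDense D ∧
      ∀ φ : Y →L[ℝ] ℝ, {d ∈ D | φ d ≠ 0}.Countable)
    (hnonsep : ¬ TopologicalSpace.SeparableSpace Y)
    (T : Y →L[ℝ] (X →L[ℝ] ℝ)) (c : ℝ) (hc : 0 < c) (hT : ∀ v, c * ‖v‖ ≤ ‖T v‖) :
    ¬ ∃ Z : Set X, Overcomplete Z := by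
  rintro ⟨Z, hZcard, hZdense⟩
  obtain ⟨D, hDdense, hDcount⟩ := hWLD
  -- `D \ {0}` is uncountable, else `Y` would be separable
  have hD0 : ¬ (D \ {0} : Set Y).Countable := by
    intro h
    have hDc : D.Countable := by
      have : D ⊆ insert 0 (D \ {0}) := by
        intro y hy
        by_cases hy0 : y = (0 : Y) <;> simp [hy0, hy]
      exact (h.insert 0).mono this
    apply hnonsep
    have hsep : TopologicalSpace.IsSeparable (Submodule.span ℝ D : Set Y) :=
      (hDc.isSeparable).span
    have hclos : closure (Submodule.span ℝ D : Set Y) = Set.univ := by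
      have := congrArg (fun p : Submodule ℝ Y => (p : Set Y)) hDdense
      simpa [Submodule.topologicalClosure_coe] using this
    have : TopologicalSpace.IsSeparable (Set.univ : Set Y) := by
      rw [← hclos]; exact hsep.closure
    exact TopologicalSpace.isSeparable_univ_iff.mp this
  have hℵ₁ : Cardinal.aleph 1 ≤ #(↥(D \ {0})) :=
    not_lt.mp (fun h => hD0 ((Cardinal.countable_iff_lt_aleph_one _).mpr h))
  -- index type of order type ω₁
  set I : Type u := (Cardinal.aleph 1).ord.ToType with hI
  have hmkI : #I = Cardinal.aleph 1 := by
    rw [hI, Cardinal.mk_toType, Cardinal.card_ord]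
  obtain ⟨f⟩ : Nonempty (I ↪ ↥(D \ {0})) := by
    rw [← Cardinal.le_def, hmkI]; exact hℵ₁
  haveI : IsWellOrder I (· < ·) :=
    isWellOrder_lt
  set g : I → Y := fun β => (f β : Y) with hg
  have hgD : ∀ β, g β ∈ D \ ({0} : Set Y) := fun β => (f β).2
  have hginj : Function.Injective g := fun a b hab => f.injective (Subtype.ext hab)
  -- the chain of closed proper subspaces
  set C : I → Submodule ℝ X :=
    fun α => ⨅ β : {b : I // α ≤ b}, LinearMap.ker (T (g β.1) : X →ₗ[ℝ] ℝ) with hC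
  have hmemC : ∀ α x, x ∈ C α ↔ ∀ β : I, α ≤ β → T (g β) x = 0 := by
    intro α x
    simp only [hC, Submodule.mem_iInf, LinearMap.mem_ker, Subtype.forall, ContinuousLinearMap.coe_coe]
  have hCclosed : ∀ α, IsClosed (C α : Set X) := by
    intro α
    have : (C α : Set X) = ⋂ β : {b : I // α ≤ b}, (LinearMap.ker (T (g β.1) : X →ₗ[ℝ] ℝ) : Set X) := by
      simp [hC]
    rw [this]
    exact isClosed_iInter fun β => ContinuousLinearMap.isClosed_ker _
  have hCproper : ∀ α, C α ≠ ⊤ := by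
    intro α htop
    -- `T (g α) ≠ 0` since `g α ≠ 0`
    have hgα : g α ≠ 0 := (hgD α).2
    have hTg : T (g α) ≠ 0 := by
      intro h0
      have h1 : c * ‖g α‖ ≤ 0 := by simpa [h0] using hT (g α)
      have h2 : 0 < ‖g α‖ := norm_pos_iff.mpr hgα
      nlinarith
    obtain ⟨x, hx⟩ : ∃ x, T (g α) x ≠ 0 := by
      by_contra h
      push_neg at h
      exact hTg (by ext x; simp [h x])
    have : x ∈ C α := htop ▸ Submodule.mem_top
    exact hx (((hmemC α x).mp this) α le_rfl)
  -- every `x` lies in some `C α`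
  have hCcover : ∀ x : X, ∃ α, x ∈ C α := by
    intro x
    have hcnt : {d ∈ D | T.flip x d ≠ 0}.Countable := hDcount (T.flip x)
    have hscnt : {β : I | T (g β) x ≠ 0}.Countable := by
      have hsub : {β : I | T (g β) x ≠ 0} ⊆ g ⁻¹' {d ∈ D | T.flip x d ≠ 0} := by
        intro β hβ
        exact ⟨(hgD β).1, by simpa using hβ⟩
      exact ((hcnt.preimage hginj).mono hsub)
    have hbdd : Set.Bounded (· < ·) {β : I | T (g β) x ≠ 0} := by
      by_contra hnb
      have hcofin : IsCofinal {β : I | T (g β) x ≠ 0} := by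
        intro a
        by_contra h
        push_neg at h
        exact hnb ⟨a, fun b hb => h b hb⟩
      have h1 := Order.cof_le hcofin
      have h2 : Order.cof I = (Cardinal.aleph 1).ord.cof := Ordinal.cof_toType _
      rw [h2] at h1
      have h3 : #{β : I | T (g β) x ≠ 0} < (Cardinal.aleph 1).ord.cof :=
      calc #{β : I | T (g β) x ≠ 0} ≤ ℵ₀ := hscnt.le_aleph0
        _ < (Cardinal.aleph 1) := Cardinal.aleph0_lt_aleph_one
        _ ≤ (Cardinal.aleph 1).ord.cof := Cardinal.isRegular_aleph_one.2
      exact absurd h1 (not_le.mpr h3)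
    obtain ⟨a, ha⟩ := hbdd
    refine ⟨a, (hmemC a _).mpr fun β hβ => ?_⟩
    by_contra h
    exact absurd (ha β h) (not_lt.mpr hβ)
  -- `Z` is covered by the sets `Z ∩ C α`; one of them has full cardinality
  have hκ := hZcard.trans hdens
  have hcofκ : Cardinal.aleph 1 < κ := hcf.trans_le (Ordinal.cof_ord_le κ)
  have hZunion : Z = ⋃ α : I, (Z ∩ (C α : Set X)) := by
    ext x
    simp only [Set.mem_iUnion, Set.mem_inter_iff]
    refine ⟨fun hx => ?_, fun ⟨α, hα, _⟩ => hα⟩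
    obtain ⟨α, hα⟩ := hCcover x
    exact ⟨α, hx, hα⟩
  have hex : ∃ α, #(↥(Z ∩ (C α : Set X))) = κ := by
    by_contra h
    push_neg at h
    have hlt : ∀ α, #(↥(Z ∩ (C α : Set X))) < κ := by
      intro α
      refine lt_of_le_of_ne ?_ (h α)
      calc #(↥(Z ∩ (C α : Set X))) ≤ #(↥Z) := Cardinal.mk_le_mk_of_subset inter_subset_left
        _ = κ := hκ
    have hsup : (⨆ α : I, #(↥(Z ∩ (C α : Set X)))) < κ := by
      apply Ordinal.iSup_lt _ hlt
      rw [hmkI]; exact hcf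
    have hle : κ ≤ #I * ⨆ α : I, #(↥(Z ∩ (C α : Set X))) := by
      rw [← hκ]
      conv_lhs => rw [hZunion]
      exact Cardinal.mk_iUnion_le _
    have : #I * (⨆ α : I, #(↥(Z ∩ (C α : Set X)))) < κ := by
      rcases eq_or_ne (⨆ α : I, #(↥(Z ∩ (C α : Set X)))) 0 with h0 | h0
      · rw [h0, mul_zero]
        exact lt_of_le_of_lt (zero_le) hcofκ
      · calc #I * (⨆ α : I, #(↥(Z ∩ (C α : Set X))))
            ≤ max #I (⨆ α : I, #(↥(Z ∩ (C α : Set X)))) := by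
              apply Cardinal.mul_le_max_of_aleph0_le_left
              rw [hmkI]; exact Cardinal.aleph0_lt_aleph_one.le
          _ < κ := max_lt (hmkI ▸ hcofκ) hsup
    exact absurd (hle.trans_lt this) (lt_irrefl κ)
  obtain ⟨α, hα⟩ := hex
  have hdense' : LinearlyDense (Z ∩ (C α : Set X)) :=
    hZdense _ inter_subset_left (by rw [hα, hκ])
  have : (⊤ : Submodule ℝ X) ≤ C α := by
    rw [← hdense']
    apply Submodule.topologicalClosure_minimal _ _ (hCclosed α)
    rw [Submodule.span_le]
    exact inter_subset_right
  exact hCproper α (top_le_iff.mp this)
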